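/- Let 0 ≤ m, n ∈ L¹(a,b) with m ≢ 0, let f, g : [0,∞) → [0,∞) be continuous and assume (F). Then for all λ, μ > 0 there exists v ∈ P° which is a subsolution of problem (P): there exists 0 ≤ k ∈ L¹(a,b) with k(x) ≤ λ m(x) f(v(x)) + μ n(x) g(v(x)) for a.e. x ∈ (a,b) and φ(v'(x)) = φ(v'(a)) − ∫_a^x k(s) ds for all x ∈ [a,b]. -/

import Mathlib

open MeasureTheory Set Filter

/-- `φ` is an odd increasing homeomorphism of `ℝ`. -/
def OddIncHomeo (φ : ℝ → ℝ) : Prop :=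
  StrictMono φ ∧ Continuous φ ∧ Function.Surjective φ ∧ ∀ x, φ (-x) = -φ x

/-- `u` is `C¹` on `[a,b]` with derivative `u'`. -/
def C1On (u u' : ℝ → ℝ) (a b : ℝ) : Prop :=
  ContinuousOn u (Icc a b) ∧ ContinuousOn u' (Icc a b) ∧
  ∀ x ∈ Icc a b, HasDerivWithinAt u (u' x) (Icc a b) x

/-- `u` (with derivative `u'`) is a solution of problem (P):
`-(φ(u'))' = λ m f(u) + μ n g(u)` in `(a,b)`, `u(a) = u(b) = 0`. -/
def IsSolutionP (φ m n f g : ℝ → ℝ) (lam mu a b : ℝ) (u u' : ℝ → ℝ) : Prop :=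
  C1On u u' a b ∧ u a = 0 ∧ u b = 0 ∧
  ∀ x ∈ Icc a b,
    φ (u' x) = φ (u' a) - ∫ s in a..x, (lam * m s * f (u s) + mu * n s * g (u s))

/-- Membership in the cone `P°`. -/
def InPint (u u' : ℝ → ℝ) (a b : ℝ) : Prop :=
  (∀ x ∈ Ioo a b, 0 < u x) ∧ u' b < 0 ∧ 0 < u' a

/-- Condition (F). -/
def CondF (φ f : ℝ → ℝ) : Prop :=
  ∃ c₀ t₀ q : ℝ, 0 < c₀ ∧ 0 < t₀ ∧ 0 < q ∧
    (∀ t ∈ Icc (0:ℝ) t₀, c₀ * t ^ q ≤ f t) ∧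
    Tendsto (fun t : ℝ => t ^ q / φ t) (nhdsWithin 0 (Ioi 0)) atTop

/-- Condition (G1). -/
def CondG1 (φ g : ℝ → ℝ) : Prop :=
  ∃ c₁ t₁ r₁ : ℝ, 0 < c₁ ∧ 0 < t₁ ∧ 0 < r₁ ∧
    (∀ t ∈ Icc (0:ℝ) t₁, g t ≤ c₁ * t ^ r₁) ∧
    Tendsto (fun t : ℝ => t ^ r₁ / φ t) (nhdsWithin 0 (Ioi 0)) (nhds 0)

/-- Condition (G2). -/
def CondG2 (φ g : ℝ → ℝ) : Prop :=
  ∃ c₂ t₂ r₂ : ℝ, 0 < c₂ ∧ 0 < t₂ ∧ 0 < r₂ ∧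
    (∀ t : ℝ, t₂ ≤ t → c₂ * t ^ r₂ ≤ g t) ∧
    Tendsto (fun t : ℝ => t ^ r₂ / φ t) atTop atTop

/-- Rectangle bounds for the integral of an antitone continuous function. -/
lemma integral_le_of_antitone {w : ℝ → ℝ} (hw : Continuous w) (hanti : Antitone w)
    {x y : ℝ} (hxy : x ≤ y) :
    (y - x) * w y ≤ (∫ s in x..y, w s) ∧ (∫ s in x..y, w s) ≤ (y - x) * w x := by
  constructor
  · have h := intervalIntegral.integral_mono_on (μ := volume) hxy
      (intervalIntegrable_const (c := w y))
      (hw.intervalIntegrable x y)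
      (fun s hs => hanti hs.2)
    simpa [intervalIntegral.integral_const, smul_eq_mul] using h
  · have h := intervalIntegral.integral_mono_on (μ := volume) hxy
      (hw.intervalIntegrable x y)
      (intervalIntegrable_const (c := w x))
      (fun s hs => hanti hs.1)
    simpa [intervalIntegral.integral_const, smul_eq_mul] using h

set_option maxHeartbeats 1600000 in
theorem exists_subsolution
    (a b : ℝ) (hab : a < b) (φ m n f g : ℝ → ℝ)
    (hφ : OddIncHomeo φ)
    (hm : IntegrableOn m (Icc a b)) (hn : IntegrableOn n (Icc a b))
    (hm0 : ∀ᵐ x ∂(volume : Measure ℝ), x ∈ Ioo a b → 0 ≤ m x)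
    (hn0 : ∀ᵐ x ∂(volume : Measure ℝ), x ∈ Ioo a b → 0 ≤ n x)
    (hmne : ¬ (∀ᵐ x ∂(volume : Measure ℝ), x ∈ Ioo a b → m x = 0))
    (hf : ContinuousOn f (Ici 0)) (hg : ContinuousOn g (Ici 0))
    (hf0 : ∀ t ∈ Ici (0:ℝ), 0 ≤ f t) (hg0 : ∀ t ∈ Ici (0:ℝ), 0 ≤ g t)
    (hF : CondF φ f) :
    ∀ lam mu : ℝ, 0 < lam → 0 < mu →
      ∃ v v' : ℝ → ℝ,
        C1On v v' a b ∧ v a = 0 ∧ v b = 0 ∧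
        InPint v v' a b ∧
        ∃ k : ℝ → ℝ, IntegrableOn k (Icc a b) ∧
          (∀ᵐ x ∂(volume : Measure ℝ), x ∈ Ioo a b → 0 ≤ k x) ∧
          (∀ᵐ x ∂(volume : Measure ℝ), x ∈ Ioo a b →
            k x ≤ lam * m x * f (v x) + mu * n x * g (v x)) ∧
          ∀ x ∈ Icc a b, φ (v' x) = φ (v' a) - ∫ s in a..x, k s := by
  intro lam mu hlam hmu
  classical
  obtain ⟨hφmono, hφcont, hφsurj, hφodd⟩ := hφ
  obtain ⟨c₀, t₀, q, hc₀, ht₀, hq, hfq, hFlim⟩ := hF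
  have hba : (0:ℝ) < b - a := sub_pos.2 hab
  -- the inverse ψ of φ
  set e := StrictMono.orderIsoOfSurjective φ hφmono hφsurj with he
  set ψ : ℝ → ℝ := fun y => e.symm y with hψdef
  have hφψ : ∀ y, φ (ψ y) = y := fun y =>
    StrictMono.orderIsoOfSurjective_self_symm_apply φ hφmono hφsurj y
  have hψφ : ∀ x, ψ (φ x) = x := fun x =>
    StrictMono.orderIsoOfSurjective_symm_apply_self φ hφmono hφsurj x
  have hψmono : StrictMono ψ := fun x y hxy => e.symm.strictMono hxy
  have hψcont : Continuous ψ := e.symm.continuous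
  have hφ0 : φ 0 = 0 := by have := hφodd 0; rw [neg_zero] at this; linarith
  have hψ0 : ψ 0 = 0 := by have := hψφ 0; rwa [hφ0] at this
  have hψpos : ∀ {y : ℝ}, 0 < y → 0 < ψ y := by
    intro y hy; have := hψmono hy; rwa [hψ0] at this
  have hψneg : ∀ {y : ℝ}, y < 0 → ψ y < 0 := by
    intro y hy; have := hψmono hy; rwa [hψ0] at this
  -- the weight ρ
  set ρ : ℝ → ℝ := fun x => (max (min (x - a) (b - x)) 0) ^ q with hρdef
  have hρcont : Continuous ρ := by
    have h1 : Continuous fun x : ℝ => max (min (x - a) (b - x)) 0 :=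
      (((continuous_id.sub continuous_const).min
        (continuous_const.sub continuous_id)).max continuous_const)
    have h2 : Continuous fun y : ℝ => y ^ q := by
      rw [continuous_iff_continuousAt]
      exact fun y => Real.continuousAt_rpow_const y q (Or.inr hq.le)
    exact h2.comp h1
  have hρnonneg : ∀ x, 0 ≤ ρ x := fun x => Real.rpow_nonneg (le_max_right _ _) q
  have hρpos : ∀ x ∈ Ioo a b, 0 < ρ x := by
    intro x hx
    apply Real.rpow_pos_of_pos
    have h : 0 < min (x - a) (b - x) := lt_min (by linarith [hx.1]) (by linarith [hx.2])
    exact lt_max_of_lt_left h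
  have hρeq : ∀ x ∈ Ioo a b, ρ x = (min (x - a) (b - x)) ^ q := by
    intro x hx
    have h : (0:ℝ) ≤ min (x - a) (b - x) :=
      (lt_min (by linarith [hx.1]) (by linarith [hx.2])).le
    rw [hρdef]; simp [max_eq_left h]
  have hρbdd : ∀ x, ‖ρ x‖ ≤ (b - a) ^ q := by
    intro x
    rw [Real.norm_of_nonneg (hρnonneg x)]
    apply Real.rpow_le_rpow (le_max_right _ _) ?_ hq.le
    apply max_le ?_ hba.le
    rcases le_total x b with hxb | hbx
    · exact (min_le_left _ _).trans (by linarith)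
    · exact (min_le_right _ _).trans (by linarith)
  -- the function k₀ = 1_{[a,b]} · m ρ
  set k₀ : ℝ → ℝ := (Icc a b).indicator (fun s => m s * ρ s) with hk₀def
  have hmρint : IntegrableOn (fun s => m s * ρ s) (Icc a b) := by
    have h := Integrable.bdd_mul (μ := volume.restrict (Icc a b)) hm
      (c := (b - a) ^ q) hρcont.aestronglyMeasurable.restrict (Eventually.of_forall hρbdd)
    exact h.congr (Eventually.of_forall fun x => mul_comm _ _)
  have hk₀int : Integrable k₀ := by
    rw [hk₀def]
    exact hmρint.integrable_indicator measurableSet_Icc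
  have hne : ∀ᵐ x : ℝ, x ≠ a ∧ x ≠ b := by
    have ha' : ∀ᵐ x : ℝ, x ∉ ({a} : Set ℝ) :=
      measure_eq_zero_iff_ae_notMem.mp (by simp)
    have hb' : ∀ᵐ x : ℝ, x ∉ ({b} : Set ℝ) :=
      measure_eq_zero_iff_ae_notMem.mp (by simp)
    filter_upwards [ha', hb'] with x h1 h2
    exact ⟨by simpa using h1, by simpa using h2⟩
  have hk₀nonneg : ∀ᵐ x : ℝ, 0 ≤ k₀ x := by
    filter_upwards [hm0, hne] with x hmx hxab
    by_cases hx : x ∈ Icc a b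
    · have hxIoo : x ∈ Ioo a b :=
        ⟨lt_of_le_of_ne hx.1 (Ne.symm hxab.1), lt_of_le_of_ne hx.2 hxab.2⟩
      rw [hk₀def, indicator_of_mem hx]
      exact mul_nonneg (hmx hxIoo) (hρnonneg x)
    · rw [hk₀def, indicator_of_notMem hx]
  -- the primitive K₀
  set K₀ : ℝ → ℝ := fun x => ∫ s in a..x, k₀ s with hK₀def
  have hK₀cont : Continuous K₀ := hk₀int.continuous_primitive a
  have hK₀a : K₀ a = 0 := intervalIntegral.integral_same
  have hK₀mono : Monotone K₀ := by
    intro x y hxy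
    have hadd := intervalIntegral.integral_add_adjacent_intervals
      (hk₀int.intervalIntegrable (a := a) (b := x))
      (hk₀int.intervalIntegrable (a := x) (b := y))
    have hpos : 0 ≤ ∫ s in x..y, k₀ s :=
      intervalIntegral.integral_nonneg_of_ae hxy hk₀nonneg
    have h1 : K₀ x + ∫ s in x..y, k₀ s = K₀ y := hadd
    linarith
  set C := K₀ b with hCdef
  have hC : 0 < C := by
    rcases lt_or_ge 0 C with h | h
    · exact h
    exfalso
    have hIoc : C = ∫ s in Ioc a b, k₀ s := intervalIntegral.integral_of_le hab.le
    have hnn : 0 ≤ ∫ s in Ioc a b, k₀ s :=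
      integral_nonneg_of_ae (ae_restrict_of_ae hk₀nonneg)
    have hC0 : (∫ s in Ioc a b, k₀ s) = 0 := le_antisymm (by linarith) hnn
    have hz := (MeasureTheory.integral_eq_zero_iff_of_nonneg_ae
      (ae_restrict_of_ae hk₀nonneg) (hk₀int.integrableOn)).mp hC0
    have h3 : ∀ᵐ x : ℝ, x ∈ Ioc a b → k₀ x = 0 :=
      (ae_restrict_iff' measurableSet_Ioc).mp hz
    apply hmne
    filter_upwards [h3] with x hx hxIoo
    have h4 : k₀ x = 0 := hx ⟨hxIoo.1, hxIoo.2.le⟩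
    rw [hk₀def, indicator_of_mem (Set.mem_Icc.mpr ⟨hxIoo.1.le, hxIoo.2.le⟩)] at h4
    rcases mul_eq_zero.mp h4 with h5 | h5
    · exact h5
    · exact absurd h5 (ne_of_gt (hρpos x hxIoo))
  -- points s₁ near a and s₂ near b
  have hC4 : (0:ℝ) < C / 4 := by linarith
  obtain ⟨s₁, hs₁K, hs₁b, hs₁a⟩ : ∃ s₁, K₀ s₁ < C / 4 ∧ s₁ < b ∧ a < s₁ := by
    have h1 : Tendsto K₀ (nhdsWithin a (Ioi a)) (nhds 0) := by
      have := (hK₀cont.tendsto a).mono_left (nhdsWithin_le_nhds (s := Ioi a))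
      rwa [hK₀a] at this
    have h2 := h1.eventually_lt_const hC4
    have h3 : ∀ᶠ x in nhdsWithin a (Ioi a), x < b :=
      eventually_nhdsWithin_of_eventually_nhds
        (eventually_of_mem (Iio_mem_nhds hab) fun x hx => hx)
    obtain ⟨s₁, hh⟩ := (h2.and (h3.and eventually_mem_nhdsWithin)).exists
    exact ⟨s₁, hh.1, hh.2.1, hh.2.2⟩
  obtain ⟨s₂, hs₂K, hs₂a, hs₂b⟩ : ∃ s₂, 3 * C / 4 < K₀ s₂ ∧ a < s₂ ∧ s₂ < b := by
    have h1 : Tendsto K₀ (nhdsWithin b (Iio b)) (nhds C) := by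
      exact (hK₀cont.tendsto b).mono_left (nhdsWithin_le_nhds (s := Iio b))
    have h2 := h1.eventually_const_lt (show 3 * C / 4 < C by linarith)
    have h3 : ∀ᶠ x in nhdsWithin b (Iio b), a < x :=
      eventually_nhdsWithin_of_eventually_nhds
        (eventually_of_mem (Ioi_mem_nhds hab) fun x hx => hx)
    obtain ⟨s₂, hh⟩ := (h2.and (h3.and eventually_mem_nhdsWithin)).exists
    exact ⟨s₂, hh.1, hh.2.1, hh.2.2⟩
  set d := min (s₁ - a) (b - s₂) with hddef
  have hd : 0 < d := lt_min (by linarith) (by linarith)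
  have hdq : 0 < d ^ q := Real.rpow_pos_of_pos hd q
  have hbaq : 0 < (b - a) ^ q := Real.rpow_pos_of_pos hba q
  -- choice of t (hence of ε)
  set R := 4 * (b - a) ^ q / (lam * c₀ * C * d ^ q) with hRdef
  have hψ4cont : Tendsto (fun t => (b - a) * ψ (4 * φ t)) (nhdsWithin 0 (Ioi 0)) (nhds 0) := by
    have hc : Continuous fun t => (b - a) * ψ (4 * φ t) :=
      continuous_const.mul (hψcont.comp (continuous_const.mul hφcont))
    have h := (hc.tendsto 0).mono_left (nhdsWithin_le_nhds (s := Ioi 0))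
    simpa [hφ0, hψ0] using h
  obtain ⟨t, hRt, htub, htpos'⟩ :=
    ((hFlim.eventually_ge_atTop R).and
      ((hψ4cont.eventually_lt_const ht₀).and eventually_mem_nhdsWithin)).exists
  have htpos : (0:ℝ) < t := htpos'
  have hφt : 0 < φ t := by have := hφmono htpos; rwa [hφ0] at this
  set ε := 4 * φ t / C with hεdef
  have hε : 0 < ε := by positivity
  have hεC : ε * C = 4 * φ t := by rw [hεdef]; field_simp
  -- intermediate value theorem to find A
  set G : ℝ → ℝ := fun A => ∫ s in a..b, ψ (A - ε * K₀ s) with hGdef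
  have hGcont : Continuous G := by
    apply intervalIntegral.continuous_parametric_intervalIntegral_of_continuous'
      (f := fun (A : ℝ) (s : ℝ) => ψ (A - ε * K₀ s)) (μ := volume)
    exact hψcont.comp (continuous_fst.sub (continuous_const.mul (hK₀cont.comp continuous_snd)))
  have hwc : ∀ A : ℝ, Continuous fun s => ψ (A - ε * K₀ s) := fun A =>
    hψcont.comp (continuous_const.sub (continuous_const.mul hK₀cont))
  have hK₀nonneg : ∀ x, a ≤ x → 0 ≤ K₀ x := by
    intro x hx; have := hK₀mono hx; rwa [hK₀a] at this
  have hK₀leC : ∀ x, x ≤ b → K₀ x ≤ C := fun x hx => hK₀mono hx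
  have hG0 : G 0 < 0 := by
    have hsplit := intervalIntegral.integral_add_adjacent_intervals
      ((hwc 0).intervalIntegrable (μ := volume) a s₂) ((hwc 0).intervalIntegrable (μ := volume) s₂ b)
    have h1 : (∫ s in a..s₂, ψ (0 - ε * K₀ s)) ≤ 0 := by
      have hmono := intervalIntegral.integral_mono_on (μ := volume) hs₂a.le
        ((hwc 0).intervalIntegrable a s₂) (intervalIntegrable_const (c := (0:ℝ)))
        (fun s hs => by
          have h2 : 0 ≤ K₀ s := hK₀nonneg s hs.1
          have h3 : (0:ℝ) - ε * K₀ s ≤ 0 := by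
            have := mul_nonneg hε.le h2; linarith
          have := hψmono.monotone h3
          rwa [hψ0] at this)
      simpa using hmono
    have h2 : (∫ s in s₂..b, ψ (0 - ε * K₀ s)) ≤ (b - s₂) * ψ (-(ε * (3 * C / 4))) := by
      have hmono := intervalIntegral.integral_mono_on (μ := volume) hs₂b.le
        ((hwc 0).intervalIntegrable s₂ b)
        (intervalIntegrable_const (c := ψ (-(ε * (3 * C / 4)))))
        (fun s hs => by
          have h2 : K₀ s₂ ≤ K₀ s := hK₀mono hs.1
          apply hψmono.monotone
          have e1 := mul_le_mul_of_nonneg_left (show 3 * C / 4 ≤ K₀ s by linarith) hε.le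
          linarith)
      simpa [intervalIntegral.integral_const, smul_eq_mul] using hmono
    have hneg : ψ (-(ε * (3 * C / 4))) < 0 := hψneg (by
      have := mul_pos hε (show (0:ℝ) < 3 * C / 4 by linarith); linarith)
    have h3 : (b - s₂) * ψ (-(ε * (3 * C / 4))) < 0 :=
      mul_neg_of_pos_of_neg (by linarith) hneg
    have hG0eq : G 0 = (∫ s in a..s₂, ψ (0 - ε * K₀ s)) + ∫ s in s₂..b, ψ (0 - ε * K₀ s) :=
      hsplit.symm
    rw [hG0eq]; linarith
  have hGC : 0 < G (ε * C) := by
    have hsplit := intervalIntegral.integral_add_adjacent_intervals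
      ((hwc (ε * C)).intervalIntegrable (μ := volume) a s₁) ((hwc (ε * C)).intervalIntegrable (μ := volume) s₁ b)
    have h1 : (s₁ - a) * ψ (ε * (3 * C / 4)) ≤ ∫ s in a..s₁, ψ (ε * C - ε * K₀ s) := by
      have hmono := intervalIntegral.integral_mono_on (μ := volume) hs₁a.le
        (intervalIntegrable_const (c := ψ (ε * (3 * C / 4))))
        ((hwc (ε * C)).intervalIntegrable a s₁)
        (fun s hs => by
          have h2 : K₀ s ≤ K₀ s₁ := hK₀mono hs.2
          apply hψmono.monotone
          have e1 := mul_le_mul_of_nonneg_left (show K₀ s ≤ C / 4 by linarith) hε.le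
          linarith)
      simpa [intervalIntegral.integral_const, smul_eq_mul] using hmono
    have h2 : (0:ℝ) ≤ ∫ s in s₁..b, ψ (ε * C - ε * K₀ s) := by
      have hmono := intervalIntegral.integral_mono_on (μ := volume) hs₁b.le
        (intervalIntegrable_const (c := (0:ℝ)))
        ((hwc (ε * C)).intervalIntegrable s₁ b)
        (fun s hs => by
          have h3 : K₀ s ≤ C := hK₀leC s hs.2
          have h4 : (0:ℝ) ≤ ε * C - ε * K₀ s := by
            have := mul_le_mul_of_nonneg_left h3 hε.le; linarith
          have := hψmono.monotone h4
          rwa [hψ0] at this)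
      simpa using hmono
    have hpos : 0 < ψ (ε * (3 * C / 4)) := hψpos (by
      have := mul_pos hε (show (0:ℝ) < 3 * C / 4 by linarith); linarith)
    have h3 : 0 < (s₁ - a) * ψ (ε * (3 * C / 4)) :=
      mul_pos (by linarith) hpos
    have hGCeq : G (ε * C)
        = (∫ s in a..s₁, ψ (ε * C - ε * K₀ s)) + ∫ s in s₁..b, ψ (ε * C - ε * K₀ s) :=
      hsplit.symm
    rw [hGCeq]; linarith
  have hεCpos : (0:ℝ) < ε * C := mul_pos hε hC
  obtain ⟨A, hA, hGA⟩ :=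
    intermediate_value_Ioo hεCpos.le hGcont.continuousOn ⟨hG0, hGC⟩
  -- the subsolution
  set w : ℝ → ℝ := fun s => ψ (A - ε * K₀ s) with hwdef
  set v : ℝ → ℝ := fun x => ∫ s in a..x, w s with hvdef
  have hwcont : Continuous w := hwc A
  have hwanti : Antitone w := by
    intro x y hxy
    apply hψmono.monotone
    have h := mul_le_mul_of_nonneg_left (hK₀mono hxy) hε.le
    linarith
  have hva : v a = 0 := intervalIntegral.integral_same
  have hvb : v b = 0 := hGA
  have hwa : w a = ψ A := by rw [hwdef]; simp [hK₀a, mul_zero, sub_zero]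
  have hwapos : 0 < w a := by rw [hwa]; exact hψpos hA.1
  have hwbneg : w b < 0 := by
    have harg : A - ε * K₀ b < 0 := by have := hA.2; rw [← hCdef]; linarith
    exact hψneg harg
  have hvderiv : ∀ x, HasDerivAt v (w x) x := fun x =>
    (hwcont.integral_hasStrictDerivAt a x).hasDerivAt
  have hvcont : Continuous v :=
    continuous_iff_continuousAt.mpr fun x => (hvderiv x).continuousAt
  have hvsub : ∀ x y : ℝ, v y - v x = ∫ s in x..y, w s := by
    intro x y
    have h := intervalIntegral.integral_add_adjacent_intervals
      (hwcont.intervalIntegrable (μ := volume) a x) (hwcont.intervalIntegrable (μ := volume) x y)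
    have h2 : v x + (∫ s in x..y, w s) = v y := h
    linarith
  -- maximum point
  obtain ⟨xs, hxsmem, hxsmax⟩ :=
    isCompact_Icc.exists_isMaxOn (nonempty_Icc.mpr hab.le) hvcont.continuousOn
  have hxsmax' : ∀ y ∈ Icc a b, v y ≤ v xs := fun y hy => hxsmax hy
  -- lower bound for the maximum
  have hht : d * t ≤ v xs := by
    rcases le_or_gt (ε * C / 2) A with hA2 | hA2
    · have hpt : ∀ s ∈ Icc a s₁, t ≤ w s := by
        intro s hs
        have h1 : K₀ s ≤ K₀ s₁ := hK₀mono hs.2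
        have h2 : φ t ≤ A - ε * K₀ s := by
          have e1 := mul_le_mul_of_nonneg_left (show K₀ s ≤ C / 4 by linarith [hs₁K]) hε.le
          have e2 : ε * (C / 4) = ε * C / 4 := by ring
          linarith [hεC]
        have h3 := hψmono.monotone h2
        rwa [hψφ] at h3
      have hmono1 := intervalIntegral.integral_mono_on (μ := volume) hs₁a.le
        (intervalIntegrable_const (c := t)) (hwcont.intervalIntegrable a s₁) hpt
      have h4 : (s₁ - a) * t ≤ v s₁ := by
        simpa [intervalIntegral.integral_const, smul_eq_mul] using hmono1
      have h5 : v s₁ ≤ v xs := hxsmax' s₁ ⟨hs₁a.le, hs₁b.le⟩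
      have h6 : d * t ≤ (s₁ - a) * t :=
        mul_le_mul_of_nonneg_right (min_le_left _ _) htpos.le
      linarith
    · have hpt : ∀ s ∈ Icc s₂ b, w s ≤ -t := by
        intro s hs
        have h1 : K₀ s₂ ≤ K₀ s := hK₀mono hs.1
        have h2 : A - ε * K₀ s ≤ φ (-t) := by
          rw [hφodd t]
          have e1 := mul_le_mul_of_nonneg_left (show 3 * C / 4 ≤ K₀ s by linarith [hs₂K]) hε.le
          have e2 : ε * (3 * C / 4) = 3 * (ε * C) / 4 := by ring
          linarith [hεC]
        have h3 := hψmono.monotone h2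
        rwa [hψφ] at h3
      have hmono2 := intervalIntegral.integral_mono_on (μ := volume) hs₂b.le
        (hwcont.intervalIntegrable s₂ b) (intervalIntegrable_const (c := -t)) hpt
      have h4 : v b - v s₂ ≤ (b - s₂) * (-t) := by
        rw [hvsub s₂ b]
        simpa [intervalIntegral.integral_const, smul_eq_mul] using hmono2
      have h5 : (b - s₂) * t ≤ v s₂ := by
        rw [hvb] at h4
        have e1 : (b - s₂) * -t = -((b - s₂) * t) := by ring
        linarith
      have h6 : v s₂ ≤ v xs := hxsmax' s₂ ⟨hs₂a.le, hs₂b.le⟩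
      have h7 : d * t ≤ (b - s₂) * t :=
        mul_le_mul_of_nonneg_right (min_le_right _ _) htpos.le
      linarith
  have hhpos : 0 < v xs := lt_of_lt_of_le (by positivity) hht
  -- key lower bound for v
  have hkey : ∀ x ∈ Ioo a b,
      v xs / (b - a) * min (x - a) (b - x) ≤ v x ∧ 0 < v x := by
    intro x hx
    obtain ⟨hax, hxb⟩ := hx
    have hxa : (0:ℝ) < x - a := by linarith
    have hxb' : (0:ℝ) < b - x := by linarith
    rcases le_total x xs with hxxs | hxsx
    · have h1 : (x - a) * w x ≤ v x := by
        have h := (integral_le_of_antitone hwcont hwanti hax.le).1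
        rw [← hvsub a x, hva] at h; linarith
      have h2 : v xs - v x ≤ (xs - x) * w x := by
        have h := (integral_le_of_antitone hwcont hwanti hxxs).2
        rw [← hvsub x xs] at h; linarith
      have h3 : (x - a) * v xs ≤ (xs - a) * v x := by
        linarith only [mul_le_mul_of_nonneg_left h2 hxa.le,
          mul_le_mul_of_nonneg_left h1 (sub_nonneg.mpr hxxs)]
      have hxsa : (0:ℝ) ≤ xs - a := sub_nonneg.mpr hxsmem.1
      have hvxpos : 0 < v x := by
        by_contra hcon
        push_neg at hcon
        linarith only [h3, mul_pos hxa hhpos, mul_nonpos_of_nonneg_of_nonpos hxsa hcon]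
      have h5 : (x - a) * v xs ≤ (b - a) * v x := by
        have : (xs - a) * v x ≤ (b - a) * v x :=
          mul_le_mul_of_nonneg_right (by linarith [hxsmem.2]) hvxpos.le
        linarith
      refine ⟨?_, hvxpos⟩
      rw [div_mul_eq_mul_div, div_le_iff₀ hba]
      have hmin : min (x - a) (b - x) ≤ x - a := min_le_left _ _
      linarith only [h5, mul_le_mul_of_nonneg_left hmin hhpos.le]
    · have h1 : -(v x) ≤ (b - x) * w x := by
        have h := (integral_le_of_antitone hwcont hwanti hxb.le).2
        rw [← hvsub x b, hvb] at h; linarith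
      have h2 : (x - xs) * w x ≤ v x - v xs := by
        have h := (integral_le_of_antitone hwcont hwanti hxsx).1
        rw [← hvsub xs x] at h; linarith
      have h3 : (b - x) * v xs ≤ (b - xs) * v x := by
        linarith only [mul_le_mul_of_nonneg_left h2 hxb'.le,
          mul_le_mul_of_nonneg_left h1 (sub_nonneg.mpr hxsx)]
      have hxsb : (0:ℝ) ≤ b - xs := sub_nonneg.mpr hxsmem.2
      have hvxpos : 0 < v x := by
        by_contra hcon
        push_neg at hcon
        linarith only [h3, mul_pos hxb' hhpos, mul_nonpos_of_nonneg_of_nonpos hxsb hcon]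
      have h5 : (b - x) * v xs ≤ (b - a) * v x := by
        have : (b - xs) * v x ≤ (b - a) * v x :=
          mul_le_mul_of_nonneg_right (by linarith [hxsmem.1]) hvxpos.le
        linarith
      refine ⟨?_, hvxpos⟩
      rw [div_mul_eq_mul_div, div_le_iff₀ hba]
      have hmin : min (x - a) (b - x) ≤ b - x := min_le_right _ _
      linarith only [h5, mul_le_mul_of_nonneg_left hmin hhpos.le]
  have hvnonneg : ∀ x ∈ Icc a b, 0 ≤ v x := by
    intro x hx
    rcases eq_or_lt_of_le hx.1 with h | h
    · rw [← h, hva]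
    rcases eq_or_lt_of_le hx.2 with h' | h'
    · rw [h', hvb]
    exact (hkey x ⟨h, h'⟩).2.le
  -- upper bound for v
  have hψA0 : 0 ≤ ψ A := (hψpos hA.1).le
  have hub : ∀ x ∈ Icc a b, v x ≤ t₀ := by
    intro x hx
    have h1 : v x - v a ≤ (x - a) * w a := by
      have h := (integral_le_of_antitone hwcont hwanti hx.1).2
      rw [← hvsub a x] at h; linarith
    have h2 : ψ A ≤ ψ (4 * φ t) := hψmono.monotone (by rw [← hεC]; exact hA.2.le)
    calc v x ≤ (x - a) * w a := by rw [hva] at h1; linarith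
    _ ≤ (b - a) * w a := mul_le_mul_of_nonneg_right (by linarith [hx.2]) (by rw [hwa]; exact hψA0)
    _ = (b - a) * ψ A := by rw [hwa]
    _ ≤ (b - a) * ψ (4 * φ t) := mul_le_mul_of_nonneg_left h2 hba.le
    _ ≤ t₀ := htub.le
  -- the bound for ε
  have hεbound : ε ≤ lam * c₀ * (d * t / (b - a)) ^ q := by
    have h1 : R * φ t ≤ t ^ q := by
      rw [← le_div_iff₀ hφt]; exact hRt
    have h1' : 4 * (b - a) ^ q / (lam * c₀ * C * d ^ q) * φ t ≤ t ^ q := by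
      rw [← hRdef]; exact h1
    have hP : (0:ℝ) < lam * c₀ * C * d ^ q := by positivity
    have h3 : 4 * (b - a) ^ q * φ t ≤ t ^ q * (lam * c₀ * C * d ^ q) := by
      have := mul_le_mul_of_nonneg_right h1' hP.le
      calc 4 * (b - a) ^ q * φ t
          = 4 * (b - a) ^ q / (lam * c₀ * C * d ^ q) * φ t * (lam * c₀ * C * d ^ q) := by
            field_simp
      _ ≤ t ^ q * (lam * c₀ * C * d ^ q) := this
    have htq : (d * t / (b - a)) ^ q = d ^ q * t ^ q / (b - a) ^ q := by
      rw [Real.div_rpow (by positivity) hba.le, Real.mul_rpow hd.le htpos.le]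
    rw [hεdef, htq]
    have heq : lam * c₀ * (d ^ q * t ^ q / (b - a) ^ q)
        = lam * c₀ * d ^ q * t ^ q / (b - a) ^ q := by ring
    rw [heq, div_le_div_iff₀ hC hbaq]
    linarith only [h3]
  -- the function k
  set k : ℝ → ℝ := fun s => ε * k₀ s with hkdef
  have hkint : IntegrableOn k (Icc a b) := (hk₀int.const_mul ε).integrableOn
  have hknn : ∀ᵐ x : ℝ, x ∈ Ioo a b → 0 ≤ k x := by
    filter_upwards [hk₀nonneg] with x hx _
    exact mul_nonneg hε.le hx
  have hkae : ∀ᵐ x : ℝ, x ∈ Ioo a b → k x ≤ lam * m x * f (v x) + mu * n x * g (v x) := by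
    filter_upwards [hm0, hn0] with x hmx hnx hx
    have hxIcc : x ∈ Icc a b := Ioo_subset_Icc_self hx
    have hvx0 : 0 ≤ v x := hvnonneg x hxIcc
    have hng : 0 ≤ mu * n x * g (v x) :=
      mul_nonneg (mul_nonneg hmu.le (hnx hx)) (hg0 _ hvx0)
    have hkx : k x = ε * (m x * ρ x) := by
      rw [hkdef, hk₀def]; simp [indicator_of_mem hxIcc]
    have hmin : 0 < min (x - a) (b - x) := lt_min (by linarith [hx.1]) (by linarith [hx.2])
    have hmain : ε * ρ x ≤ lam * f (v x) := by
      have hρx : ρ x = min (x - a) (b - x) ^ q := hρeq x hx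
      have hvlb : d * t / (b - a) * min (x - a) (b - x) ≤ v x := by
        have h1 := (hkey x hx).1
        have h2 : d * t / (b - a) ≤ v xs / (b - a) := by gcongr
        exact le_trans (mul_le_mul_of_nonneg_right h2 hmin.le) h1
      have hvq : (d * t / (b - a) * min (x - a) (b - x)) ^ q ≤ v x ^ q :=
        Real.rpow_le_rpow (by positivity) hvlb hq.le
      have hsplit : (d * t / (b - a) * min (x - a) (b - x)) ^ q
          = (d * t / (b - a)) ^ q * min (x - a) (b - x) ^ q :=
        Real.mul_rpow (by positivity) hmin.le
      have hfv : c₀ * v x ^ q ≤ f (v x) := hfq _ ⟨hvx0, hub x hxIcc⟩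
      calc ε * ρ x = ε * min (x - a) (b - x) ^ q := by rw [hρx]
      _ ≤ lam * c₀ * (d * t / (b - a)) ^ q * min (x - a) (b - x) ^ q :=
          mul_le_mul_of_nonneg_right hεbound (Real.rpow_nonneg hmin.le q)
      _ = lam * c₀ * ((d * t / (b - a)) ^ q * min (x - a) (b - x) ^ q) := by ring
      _ ≤ lam * c₀ * v x ^ q := by
          apply mul_le_mul_of_nonneg_left ?_ (by positivity)
          rw [← hsplit]; exact hvq
      _ = lam * (c₀ * v x ^ q) := by ring
      _ ≤ lam * f (v x) := mul_le_mul_of_nonneg_left hfv hlam.le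
    have hmm : ε * (m x * ρ x) ≤ lam * m x * f (v x) := by
      have h := mul_le_mul_of_nonneg_right hmain (hmx hx)
      calc ε * (m x * ρ x) = ε * ρ x * m x := by ring
      _ ≤ lam * f (v x) * m x := h
      _ = lam * m x * f (v x) := by ring
    rw [hkx]; linarith
  have hfinal : ∀ x ∈ Icc a b, φ (w x) = φ (w a) - ∫ s in a..x, k s := by
    intro x hx
    have h1 : (∫ s in a..x, k s) = ε * K₀ x := by
      rw [hkdef, hK₀def]
      exact intervalIntegral.integral_const_mul ε k₀
    rw [h1, hwdef]
    simp only [hφψ, hK₀a]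
    ring
  exact ⟨v, w,
    ⟨hvcont.continuousOn, hwcont.continuousOn, fun x hx => (hvderiv x).hasDerivWithinAt⟩,
    hva, hvb,
    ⟨fun x hx => (hkey x hx).2, hwbneg, hwapos⟩,
    k, hkint, hknn, hkae, hfinal⟩
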